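/- The number of isomorphism classes of Catalan pairs of size n equals the n-th Catalan number. -/

import Mathlib

/-- A Catalan pair on a type `X`: two strict orders `S`, `R` whose
symmetrizations partition `X² \ diagonal`, with `S ∘ R ⊆ R`. -/
def IsCatalanPair {X : Type*} (S R : X → X → Prop) : Prop :=
  (∀ x, ¬ S x x) ∧ (∀ x y z, S x y → S y z → S x z) ∧
  (∀ x, ¬ R x x) ∧ (∀ x y z, R x y → R y z → R x z) ∧
  (∀ x y, x ≠ y → S x y ∨ S y x ∨ R x y ∨ R y x) ∧
  (∀ x y, ¬ ((S x y ∨ S y x) ∧ (R x y ∨ R y x))) ∧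
  (∀ x y z, S x y → R y z → R x z)

set_option maxHeartbeats 1000000

namespace CatalanPairAux

/-! ### The Catalan-number count of encodings -/

def Mset (n : ℕ) : Type :=
  {m : Fin n → ℕ // (∀ j, m j ≤ (j : ℕ)) ∧
    ∀ j k : Fin n, j < k → m k ≤ (j : ℕ) → m k ≤ m j}

instance (n : ℕ) : Finite (Mset n) := by
  apply Finite.of_injective (fun m : Mset n => fun j : Fin n =>
    (⟨m.1 j, lt_of_le_of_lt (m.2.1 j) j.isLt⟩ : Fin n))
  intro a b h
  apply Subtype.ext
  funext j
  exact congrArg Fin.val (congrFun h j)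

lemma key_ge (n : ℕ) (m : Mset (n + 1)) (i : Fin (n + 1)) (hi : (i : ℕ) < n)
    (hti : m.1 (Fin.last n) ≤ (i : ℕ)) : m.1 (Fin.last n) ≤ m.1 i :=
  m.2.2 i (Fin.last n) (by rw [Fin.lt_iff_val_lt_val, Fin.val_last]; exact hi) hti

section Fiber

variable (n t : ℕ) (ht : t ≤ n)

def splitFun (m : Mset (n + 1)) :
    Mset t × Mset (n - t) := by
  refine ⟨⟨fun j => m.1 ⟨(j : ℕ), by omega⟩, ?_, ?_⟩,
          ⟨fun j => m.1 ⟨t + (j : ℕ), by omega⟩ - t, ?_, ?_⟩⟩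
  · intro j; exact m.2.1 _
  · intro j k hjk hle
    exact m.2.2 ⟨(j : ℕ), by omega⟩ ⟨(k : ℕ), by omega⟩ (Fin.mk_lt_mk.mpr hjk) hle
  · intro j
    have h1 := m.2.1 (⟨t + (j : ℕ), by omega⟩ : Fin (n + 1))
    simp only [Fin.val_mk] at h1 ⊢
    omega
  · intro j k hjk hle
    have hjk' : (j : ℕ) < (k : ℕ) := hjk
    have h2 := m.2.2 ⟨t + (j : ℕ), by omega⟩ ⟨t + (k : ℕ), by omega⟩
      (Fin.mk_lt_mk.mpr (by omega)) (by simp only [Fin.val_mk] at hle ⊢; omega)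
    simp only [Fin.val_mk] at h2 hle ⊢
    omega

def joinFun (x : Mset t × Mset (n - t)) : Mset (n + 1) := by
  refine ⟨fun j => if h : (j : ℕ) < t then x.1.1 ⟨(j : ℕ), h⟩
      else if h2 : (j : ℕ) < n then t + x.2.1 ⟨(j : ℕ) - t, by omega⟩
      else t, ?_, ?_⟩
  · intro j
    dsimp only
    split_ifs with h h2
    · exact le_trans (x.1.2.1 ⟨(j : ℕ), h⟩) (le_refl _)
    · have h3 := x.2.2.1 ⟨(j : ℕ) - t, by omega⟩
      simp only [Fin.val_mk] at h3; omega
    · omega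
  · intro j k hjk hle
    dsimp only at hle ⊢
    have hjk' : (j : ℕ) < (k : ℕ) := hjk
    by_cases hk : (k : ℕ) < t
    · have hj : (j : ℕ) < t := by omega
      rw [dif_pos hk] at hle ⊢
      rw [dif_pos hj]
      exact x.1.2.2 ⟨(j : ℕ), hj⟩ ⟨(k : ℕ), hk⟩ (Fin.mk_lt_mk.mpr hjk') hle
    · by_cases hk2 : (k : ℕ) < n
      · rw [dif_neg hk, dif_pos hk2] at hle ⊢
        have hj : ¬ (j : ℕ) < t := by omega
        have hj2 : (j : ℕ) < n := by omega
        rw [dif_neg hj, dif_pos hj2]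
        have h4 := x.2.2.2 ⟨(j : ℕ) - t, by omega⟩ ⟨(k : ℕ) - t, by omega⟩
          (Fin.mk_lt_mk.mpr (by omega)) (by simp only [Fin.val_mk] at hle ⊢; omega)
        try simp only [Fin.val_mk] at h4 ⊢
        omega
      · rw [dif_neg hk, dif_neg hk2] at hle ⊢
        have hj : ¬ (j : ℕ) < t := by omega
        have hj2 : (j : ℕ) < n := by omega
        rw [dif_neg hj, dif_pos hj2]
        omega

lemma joinFun_last (x : Mset t × Mset (n - t)) :
    (joinFun n t ht x).1 (Fin.last n) = t := by
  show dite _ _ _ = _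
  rw [dif_neg (by rw [Fin.val_last]; omega), dif_neg (by rw [Fin.val_last]; omega)]

def fiberEquiv :
    {m : Mset (n + 1) // m.1 (Fin.last n) = t} ≃ Mset t × Mset (n - t) where
  toFun m := splitFun n t ht m.1
  invFun x := ⟨joinFun n t ht x, joinFun_last n t ht x⟩
  left_inv m := by
    obtain ⟨m, hm⟩ := m
    apply Subtype.ext; apply Subtype.ext
    funext j
    show dite _ _ _ = _
    split_ifs with h h2
    · rfl
    · show t + (m.1 ⟨t + ((j : ℕ) - t), _⟩ - t) = m.1 j
      have heq : (⟨t + ((j : ℕ) - t), by omega⟩ : Fin (n + 1)) = j :=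
        Fin.ext (by rw [Fin.val_mk]; omega)
      rw [heq]
      have hge : m.1 (Fin.last n) ≤ m.1 j := key_ge n m j h2 (by omega)
      rw [hm] at hge
      omega
    · have heq : j = Fin.last n := Fin.ext (by rw [Fin.val_last]; omega)
      rw [heq, hm]
  right_inv x := by
    apply Prod.ext
    · apply Subtype.ext; funext j
      show dite _ _ _ = _
      rw [dif_pos (show ((⟨(j : ℕ), by omega⟩ : Fin (n + 1)) : ℕ) < t from j.isLt)]
    · apply Subtype.ext; funext j
      have hj : t + (j : ℕ) < n := by omega
      show (dite _ _ _ : ℕ) - t = _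
      rw [dif_neg (show ¬ ((⟨t + (j : ℕ), by omega⟩ : Fin (n + 1)) : ℕ) < t by
            rw [Fin.val_mk]; omega),
          dif_pos (show ((⟨t + (j : ℕ), by omega⟩ : Fin (n + 1)) : ℕ) < n by
            rw [Fin.val_mk]; omega)]
      simp only [Fin.val_mk]
      rw [show (⟨t + (j : ℕ) - t, by omega⟩ : Fin (n - t)) = j from
        Fin.ext (by simp only [Fin.val_mk]; omega)]
      omega

end Fiber

lemma nat_card_sigma {ι : Type*} [Fintype ι] (f : ι → Type*) [∀ i, Finite (f i)] :
    Nat.card (Σ i, f i) = ∑ i, Nat.card (f i) := by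
  letI : ∀ i, Fintype (f i) := fun i => Fintype.ofFinite (f i)
  simp only [Nat.card_eq_fintype_card, Fintype.card_sigma]

lemma card_Mset : ∀ n, Nat.card (Mset n) = catalan n := by
  intro n
  induction n using Nat.strong_induction_on with
  | _ n ih =>
    match n with
    | 0 =>
      rw [catalan_zero]
      have h1 : Subsingleton (Mset 0) := ⟨fun a b => Subtype.ext (funext fun j => j.elim0)⟩
      have h2 : Nonempty (Mset 0) := ⟨⟨fun j => j.elim0, fun j => j.elim0, fun j => j.elim0⟩⟩
      rw [Nat.card_eq_one_iff_unique]
      exact ⟨h1, h2⟩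
    | (m + 1) =>
      have e1 : Mset (m + 1) ≃ Σ t : Fin (m + 1), {f : Mset (m + 1) // f.1 (Fin.last m) = (t : ℕ)} := by
        refine (Equiv.sigmaFiberEquiv (fun f : Mset (m + 1) =>
          (⟨f.1 (Fin.last m), lt_of_le_of_lt (f.2.1 _) (by rw [Fin.val_last]; omega)⟩
            : Fin (m + 1)))).symm.trans
          (Equiv.sigmaCongrRight fun t => Equiv.subtypeEquivRight fun f => ?_)
        constructor
        · intro h; rw [← h]
        · intro h; exact Fin.ext (by rw [Fin.val_mk]; exact h)
      have e2 : ∀ t : Fin (m + 1),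
          {f : Mset (m + 1) // f.1 (Fin.last m) = (t : ℕ)} ≃ Mset t × Mset (m - t) :=
        fun t => fiberEquiv m t (Nat.lt_succ_iff.mp t.isLt)
      rw [Nat.card_congr (e1.trans (Equiv.sigmaCongrRight e2)),
        nat_card_sigma, catalan_succ]
      apply Finset.sum_congr rfl
      intro t _
      rw [Nat.card_prod, ih t (by omega), ih (m - t) (by omega)]

/-! ### The Catalan pair attached to an encoding -/

abbrev CPair (n : ℕ) :=
  {sr : (Fin n → Fin n → Prop) × (Fin n → Fin n → Prop) // IsCatalanPair sr.1 sr.2}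

def crel (n : ℕ) (p q : CPair n) : Prop :=
  ∃ ξ : Fin n ≃ Fin n, ∀ x y,
    (p.val.1 x y ↔ q.val.1 (ξ x) (ξ y)) ∧ (p.val.2 x y ↔ q.val.2 (ξ x) (ξ y))

lemma crel_equivalence (n : ℕ) : Equivalence (crel n) where
  refl p := ⟨Equiv.refl _, fun x y => ⟨Iff.rfl, Iff.rfl⟩⟩
  symm := by
    rintro p q ⟨ξ, h⟩
    refine ⟨ξ.symm, fun x y => ?_⟩
    have h1 := (h (ξ.symm x) (ξ.symm y)).1
    have h2 := (h (ξ.symm x) (ξ.symm y)).2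
    rw [Equiv.apply_symm_apply, Equiv.apply_symm_apply] at h1 h2
    exact ⟨h1.symm, h2.symm⟩
  trans := by
    rintro p q r ⟨ξ, h⟩ ⟨ζ, h'⟩
    exact ⟨ξ.trans ζ, fun x y =>
      ⟨(h x y).1.trans (h' (ξ x) (ξ y)).1, (h x y).2.trans (h' (ξ x) (ξ y)).2⟩⟩

def pairS (n : ℕ) (m : Mset n) (x y : Fin n) : Prop :=
  (x : ℕ) < (y : ℕ) ∧ m.1 y ≤ (x : ℕ)

def pairR (n : ℕ) (m : Mset n) (x y : Fin n) : Prop :=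
  (y : ℕ) < (x : ℕ) ∧ (y : ℕ) < m.1 x

lemma isCatalanPair_pair (n : ℕ) (m : Mset n) :
    IsCatalanPair (pairS n m) (pairR n m) := by
  refine ⟨?_, ?_, ?_, ?_, ?_, ?_, ?_⟩
  · rintro x ⟨h, -⟩; omega
  · rintro x y z ⟨hxy, hmy⟩ ⟨hyz, hmz⟩
    have := m.2.2 y z (Fin.lt_iff_val_lt_val.mpr hyz) hmz
    exact ⟨by omega, by omega⟩
  · rintro x ⟨h, -⟩; omega
  · rintro x y z ⟨h1, h2⟩ ⟨h3, h4⟩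
    exact ⟨by omega, by omega⟩
  · intro x y hxy
    have hne : (x : ℕ) ≠ (y : ℕ) := fun h => hxy (Fin.ext h)
    rcases lt_or_gt_of_ne hne with h | h
    · by_cases hc : m.1 y ≤ (x : ℕ)
      · exact Or.inl ⟨h, hc⟩
      · exact Or.inr (Or.inr (Or.inr ⟨h, by omega⟩))
    · by_cases hc : m.1 x ≤ (y : ℕ)
      · exact Or.inr (Or.inl ⟨h, hc⟩)
      · exact Or.inr (Or.inr (Or.inl ⟨h, by omega⟩))
  · rintro x y ⟨hS | hS, hR | hR⟩ <;>
      · obtain ⟨a1, a2⟩ := hS; obtain ⟨b1, b2⟩ := hR; omega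
  · rintro x y z ⟨hxy, hmy⟩ ⟨hzy, hzm⟩
    refine ⟨by omega, ?_⟩
    by_contra hc
    have := m.2.2 x y (Fin.lt_iff_val_lt_val.mpr hxy) hmy
    omega

def toPair (n : ℕ) (m : Mset n) : CPair n :=
  ⟨(pairS n m, pairR n m), isCatalanPair_pair n m⟩

/-! ### Injectivity -/

lemma strictMono_eq_id {n : ℕ} (ξ : Fin n ≃ Fin n) (h : StrictMono ξ) :
    ∀ x, ξ x = x := by
  intro x
  let e : Fin n ≃o Fin n := ⟨ξ, by intro a b; exact h.le_iff_le⟩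
  have he : e = OrderIso.refl (Fin n) := Subsingleton.elim _ _
  exact congrArg (fun (f : Fin n ≃o Fin n) => f x) he

lemma pair_inj (n : ℕ) (m m' : Mset n) (h : crel n (toPair n m) (toPair n m')) :
    m = m' := by
  obtain ⟨ξ, hξ⟩ := h
  have hmono : StrictMono ξ := by
    intro x y hxy
    have hxy' : (x : ℕ) < (y : ℕ) := hxy
    by_cases hc : m.1 y ≤ (x : ℕ)
    · have hS : pairS n m x y := ⟨hxy', hc⟩
      have := (hξ x y).1.mp hS
      exact Fin.lt_iff_val_lt_val.mpr this.1
    · have hR : pairR n m y x := ⟨hxy', by omega⟩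
      have := (hξ y x).2.mp hR
      exact Fin.lt_iff_val_lt_val.mpr this.1
  have hid := strictMono_eq_id ξ hmono
  have hSiff : ∀ x y, pairS n m x y ↔ pairS n m' x y := by
    intro x y
    have := (hξ x y).1
    rwa [hid x, hid y] at this
  have hle : ∀ (a b : Mset n), (∀ x y, pairS n a x y ↔ pairS n b x y) →
      ∀ y, b.1 y ≤ a.1 y := by
    intro a b hab y
    rcases eq_or_lt_of_le (a.2.1 y) with he | hl
    · rw [he]; exact b.2.1 y
    · have hx : pairS n a ⟨a.1 y, lt_trans hl y.isLt⟩ y := ⟨hl, le_refl _⟩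
      exact ((hab _ y).1 hx).2
  apply Subtype.ext; funext y
  exact le_antisymm (hle m' m (fun x y => (hSiff x y).symm) y) (hle m m' hSiff y)

/-! ### Surjectivity -/

section Surj

variable {n : ℕ} (S R : Fin n → Fin n → Prop)

def Lrel (x y : Fin n) : Prop := S x y ∨ R y x

lemma Lrel_irrefl (h : IsCatalanPair S R) (x : Fin n) : ¬ Lrel S R x x := by
  rintro (hs | hr)
  · exact h.1 x hs
  · exact h.2.2.1 x hr

lemma Lrel_total (h : IsCatalanPair S R) {x y : Fin n} (hxy : x ≠ y) :
    Lrel S R x y ∨ Lrel S R y x := by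
  rcases h.2.2.2.2.1 x y hxy with hs | hs | hr | hr
  · exact Or.inl (Or.inl hs)
  · exact Or.inr (Or.inl hs)
  · exact Or.inr (Or.inr hr)
  · exact Or.inl (Or.inr hr)

lemma Lrel_trans (h : IsCatalanPair S R) {x y z : Fin n}
    (h1 : Lrel S R x y) (h2 : Lrel S R y z) : Lrel S R x z := by
  obtain ⟨hSi, hStr, hRi, hRtr, htot, hdis, hSR⟩ := h
  rcases h1 with hs1 | hr1 <;> rcases h2 with hs2 | hr2
  · exact Or.inl (hStr _ _ _ hs1 hs2)
  · have hxz : x ≠ z := by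
      rintro rfl
      exact hdis x y ⟨Or.inl hs1, Or.inl hr2⟩
    rcases htot x z hxz with hs | hs | hr | hr
    · exact Or.inl hs
    · exact absurd (hStr _ _ _ hs hs1) fun hzy => hdis z y ⟨Or.inl hzy, Or.inl hr2⟩
    · exact absurd (hRtr _ _ _ hr hr2) fun hxy => hdis x y ⟨Or.inl hs1, Or.inl hxy⟩
    · exact Or.inr hr
  · have hxz : x ≠ z := by
      rintro rfl
      exact hdis y x ⟨Or.inl hs2, Or.inl hr1⟩
    rcases htot x z hxz with hs | hs | hr | hr
    · exact Or.inl hs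
    · exact absurd (hStr _ _ _ hs2 hs) fun hyx => hdis y x ⟨Or.inl hyx, Or.inl hr1⟩
    · exact absurd (hRtr _ _ _ hr1 hr) fun hyz => hdis y z ⟨Or.inl hs2, Or.inl hyz⟩
    · exact Or.inr hr
  · exact Or.inr (hRtr _ _ _ hr2 hr1)

open Classical in
lemma exists_orderIso (h : IsCatalanPair S R) : ∃ ξ : Fin n ≃ Fin n, ∀ x y : Fin n,
    Lrel S R x y ↔ ξ x < ξ y := by
  classical
  set c : Fin n → ℕ := fun x => (Finset.univ.filter (fun z => Lrel S R z x)).card with hc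
  have hmono : ∀ {x y : Fin n}, Lrel S R x y → c x < c y := by
    intro x y hxy
    apply Finset.card_lt_card
    constructor
    · intro z hz
      simp only [Finset.mem_filter, Finset.mem_univ, true_and] at hz ⊢
      exact Lrel_trans S R h hz hxy
    · intro hsub
      have hx : x ∈ Finset.univ.filter (fun z => Lrel S R z y) := by
        simp only [Finset.mem_filter, Finset.mem_univ, true_and]; exact hxy
      have hmem := hsub hx
      simp only [Finset.mem_filter, Finset.mem_univ, true_and] at hmem
      exact Lrel_irrefl S R h x hmem
  have hcb : ∀ x, c x < n := by
    intro x
    have hss : (Finset.univ.filter (fun z => Lrel S R z x)) ⊂ Finset.univ := by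
      rw [Finset.ssubset_univ_iff]
      intro he
      have hx := Finset.mem_univ x
      rw [← he] at hx
      simp only [Finset.mem_filter, Finset.mem_univ, true_and] at hx
      exact Lrel_irrefl S R h x hx
    have := Finset.card_lt_card hss
    simpa using this
  set g : Fin n → Fin n := fun x => ⟨c x, hcb x⟩ with hg
  have hginj : Function.Injective g := by
    intro x y hxy
    by_contra hne
    rcases Lrel_total S R h hne with hl | hl
    · exact Nat.ne_of_lt (hmono hl) (congrArg Fin.val hxy)
    · exact Nat.ne_of_lt (hmono hl) (congrArg Fin.val hxy).symm
  have hgbij : Function.Bijective g := (Finite.injective_iff_bijective).mp hginj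
  refine ⟨Equiv.ofBijective g hgbij, fun x y => ?_⟩
  constructor
  · intro hl
    exact Fin.mk_lt_mk.mpr (hmono hl)
  · intro hlt
    have hne : x ≠ y := by
      rintro rfl
      exact lt_irrefl _ hlt
    rcases Lrel_total S R h hne with hl | hl
    · exact hl
    · exfalso
      have h1 : (g x : ℕ) < (g y : ℕ) := hlt
      have h2 : c y < c x := hmono hl
      simp only [hg] at h1
      omega

end Surj

lemma isCatalanPair_comp {n : ℕ} (S R : Fin n → Fin n → Prop) (e : Fin n ≃ Fin n)
    (h : IsCatalanPair S R) :
    IsCatalanPair (fun x y => S (e x) (e y)) (fun x y => R (e x) (e y)) := by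
  obtain ⟨hSi, hStr, hRi, hRtr, htot, hdis, hSR⟩ := h
  refine ⟨fun x => hSi (e x), fun x y z => hStr _ _ _,
    fun x => hRi (e x), fun x y z => hRtr _ _ _,
    fun x y hxy => htot _ _ (fun hh => hxy (e.injective hh)),
    fun x y => hdis _ _, fun x y z => hSR _ _ _⟩

lemma pair_surj (n : ℕ) (p : CPair n) : ∃ m : Mset n, crel n (toPair n m) p := by
  classical
  obtain ⟨⟨S, R⟩, hp⟩ := p
  obtain ⟨ξ, hξ⟩ := exists_orderIso S R hp
  set S₀ : Fin n → Fin n → Prop := fun x y => S (ξ.symm x) (ξ.symm y) with hS₀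
  set R₀ : Fin n → Fin n → Prop := fun x y => R (ξ.symm x) (ξ.symm y) with hR₀
  have h₀ : IsCatalanPair S₀ R₀ := isCatalanPair_comp S R ξ.symm hp
  have hL₀ : ∀ x y : Fin n, (S₀ x y ∨ R₀ y x) ↔ (x : ℕ) < (y : ℕ) := by
    intro x y
    have h1 := hξ (ξ.symm x) (ξ.symm y)
    rw [Equiv.apply_symm_apply, Equiv.apply_symm_apply] at h1
    exact h1
  have hS₀lt : ∀ {x y : Fin n}, S₀ x y → (x : ℕ) < (y : ℕ) :=
    fun {x y} hs => (hL₀ x y).1 (Or.inl hs)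
  have hR₀lt : ∀ {x y : Fin n}, R₀ x y → (y : ℕ) < (x : ℕ) :=
    fun {x y} hr => (hL₀ y x).1 (Or.inr hr)
  obtain ⟨hSi, hStr, hRi, hRtr, htot, hdis, hSR⟩ := h₀
  have cond3 : ∀ (a z y : Fin n), S₀ a y → (a : ℕ) < (z : ℕ) → (z : ℕ) < (y : ℕ) →
      S₀ z y := by
    intro a z y hay haz hzy
    have hne : z ≠ y := fun he => by rw [he] at hzy; omega
    rcases htot z y hne with hs | hs | hr | hr
    · exact hs
    · exact absurd (hS₀lt hs) (by omega)
    · exact absurd (hR₀lt hr) (by omega)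
    · exact absurd (hR₀lt (hSR a y z hay hr)) (by omega)
  set mf : Fin n → ℕ :=
    fun y => sInf ({(y : ℕ)} ∪ {k : ℕ | ∃ hk : k < n, S₀ ⟨k, hk⟩ y}) with hmf
  have hnemp : ∀ y : Fin n,
      ({(y : ℕ)} ∪ {k : ℕ | ∃ hk : k < n, S₀ ⟨k, hk⟩ y}).Nonempty :=
    fun y => ⟨(y : ℕ), Or.inl rfl⟩
  have hmle : ∀ y : Fin n, mf y ≤ (y : ℕ) := fun y => Nat.sInf_le (Or.inl rfl)
  have hmem : ∀ y : Fin n, mf y = (y : ℕ) ∨ ∃ hk : mf y < n, S₀ ⟨mf y, hk⟩ y := by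
    intro y
    have := Nat.sInf_mem (hnemp y)
    rcases this with he | hk
    · exact Or.inl he
    · exact Or.inr hk
  have charS : ∀ x y : Fin n, S₀ x y ↔ ((x : ℕ) < (y : ℕ) ∧ mf y ≤ (x : ℕ)) := by
    intro x y
    constructor
    · intro hs
      refine ⟨hS₀lt hs, Nat.sInf_le (Or.inr ⟨x.isLt, ?_⟩)⟩
      rw [Fin.eta]
      exact hs
    · rintro ⟨hxy, hmx⟩
      have h1 : mf y < (y : ℕ) := lt_of_le_of_lt hmx hxy
      rcases hmem y with he | ⟨hk, hS⟩
      · omega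
      · rcases eq_or_lt_of_le hmx with he | hl
        · have heq : (⟨mf y, hk⟩ : Fin n) = x := Fin.ext he
          rwa [heq] at hS
        · exact cond3 _ x y hS hl hxy
  have charR : ∀ x y : Fin n, R₀ x y ↔ ((y : ℕ) < (x : ℕ) ∧ (y : ℕ) < mf x) := by
    intro x y
    constructor
    · intro hr
      refine ⟨hR₀lt hr, ?_⟩
      by_contra hc
      have hs : S₀ y x := (charS y x).2 ⟨hR₀lt hr, by omega⟩
      exact hdis y x ⟨Or.inl hs, Or.inr hr⟩
    · rintro ⟨hyx, hym⟩
      have hney : x ≠ y := fun he => by rw [he] at hyx; omega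
      rcases htot x y hney with hs | hs | hr | hr
      · exact absurd (hS₀lt hs) (by omega)
      · have := (charS y x).1 hs; omega
      · exact hr
      · exact absurd (hR₀lt hr) (by omega)
  have hmcond : ∀ j k : Fin n, j < k → mf k ≤ (j : ℕ) → mf k ≤ mf j := by
    intro j k hjk hle
    have hjk' : (j : ℕ) < (k : ℕ) := hjk
    have hSjk : S₀ j k := (charS j k).2 ⟨hjk', hle⟩
    rcases eq_or_lt_of_le (hmle j) with he | hl
    · omega
    · have hjn : mf j < n := lt_trans hl j.isLt
      have hSj : S₀ ⟨mf j, hjn⟩ j := (charS ⟨mf j, hjn⟩ j).2 ⟨hl, le_refl _⟩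
      have hSk : S₀ ⟨mf j, hjn⟩ k := hStr _ _ _ hSj hSjk
      exact ((charS _ k).1 hSk).2
  refine ⟨⟨mf, hmle, hmcond⟩, ξ.symm, fun x y => ?_⟩
  exact ⟨(charS x y).symm, (charR x y).symm⟩

end CatalanPairAux

theorem card_catalan_pairs (n : ℕ) :
    Nat.card (Quot (fun
        (p q : {sr : (Fin n → Fin n → Prop) × (Fin n → Fin n → Prop) //
          IsCatalanPair sr.1 sr.2}) =>
      ∃ ξ : Fin n ≃ Fin n, ∀ x y,
        (p.val.1 x y ↔ q.val.1 (ξ x) (ξ y)) ∧ (p.val.2 x y ↔ q.val.2 (ξ x) (ξ y))))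
      = catalan n := by
  show Nat.card (Quot (CatalanPairAux.crel n)) = catalan n
  have hbij : Function.Bijective (fun m : CatalanPairAux.Mset n =>
      Quot.mk (CatalanPairAux.crel n) (CatalanPairAux.toPair n m)) := by
    constructor
    · intro a b hab
      apply CatalanPairAux.pair_inj
      exact ((CatalanPairAux.crel_equivalence n).eqvGen_iff).1 (Quot.eq.1 hab)
    · intro q
      induction q using Quot.ind with
      | _ p =>
        obtain ⟨m, hm⟩ := CatalanPairAux.pair_surj n p
        exact ⟨m, Quot.sound hm⟩
  rw [← Nat.card_eq_of_bijective _ hbij]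
  exact CatalanPairAux.card_Mset n
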